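/- Let K be a d×d real symmetric matrix with ||K||_op ≤ B, let Γ = ∂B(0, 2||K||_op) ⊂ ℂ, and suppose sup_{z∈Γ} ||(K - zI)^{-1}||_op ≤ M_R. If Γ₀ ⊂ Γ is a (1/√d)-net of Γ, then for all z ∈ Γ, all 1 ≤ i ≤ d, and all a ∈ ℝ^d: |R(z;K)_i^T a| ≤ (1 + M_R)·max_{z₀ ∈ Γ₀} max_{1≤j≤d} |R(z₀;K)_j^T a|, where R(z;K) = (K - zI)^{-1} and R(z;K)_i denotes its i-th row. -/

import Mathlib

open Matrix

/-- Euclidean norm of a complex vector. -/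
noncomputable def cNorm {d : ℕ} (v : Fin d → ℂ) : ℝ :=
  Real.sqrt (∑ i, ‖v i‖ ^ 2)

/-- Euclidean norm of a real vector. -/
noncomputable def rNorm {d : ℕ} (v : Fin d → ℝ) : ℝ :=
  Real.sqrt (∑ i, v i ^ 2)

/-- Resolvent net bound: if `‖K‖_op ≤ B`, `Γ` is the circle of radius `2B`,
`‖R(z;K)‖_op ≤ M_R` on `Γ`, and `Γ₀ ⊆ Γ` is a `1/√d`-net of `Γ`, then for every `z ∈ Γ`,
row `i` and vector `a`,
`|R(z;K)ᵢᵀ a| ≤ (1 + M_R) · max_{z₀ ∈ Γ₀} max_j |R(z₀;K)ⱼᵀ a|`. -/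
theorem stmt16 {d : ℕ} (hd : 0 < d) (K : Matrix (Fin d) (Fin d) ℝ) (hKsym : K.IsSymm)
    (B M_R : ℝ) (hB : 0 < B)
    (hKB : ∀ v : Fin d → ℝ, rNorm (K.mulVec v) ≤ B * rNorm v)
    (Res : ℂ → Matrix (Fin d) (Fin d) ℂ)
    (hRes : ∀ z, Res z = (K.map (Complex.ofReal) - z • (1 : Matrix (Fin d) (Fin d) ℂ))⁻¹)
    (hinv : ∀ z ∈ Metric.sphere (0 : ℂ) (2 * B),
      IsUnit (K.map (Complex.ofReal) - z • (1 : Matrix (Fin d) (Fin d) ℂ)))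
    (hMR : ∀ z ∈ Metric.sphere (0 : ℂ) (2 * B), ∀ v : Fin d → ℂ,
      cNorm ((Res z).mulVec v) ≤ M_R * cNorm v)
    (Γ₀ : Finset ℂ) (hΓ₀ : ↑Γ₀ ⊆ Metric.sphere (0 : ℂ) (2 * B))
    (hnet : ∀ z ∈ Metric.sphere (0 : ℂ) (2 * B),
      ∃ z₀ ∈ Γ₀, ‖z - z₀‖ ≤ 1 / Real.sqrt d)
    (a : Fin d → ℝ) (B' : ℝ)
    (hB' : ∀ z₀ ∈ Γ₀, ∀ j : Fin d, ‖∑ l, Res z₀ j l * (a l : ℂ)‖ ≤ B') :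
    ∀ z ∈ Metric.sphere (0 : ℂ) (2 * B), ∀ i : Fin d,
      ‖∑ l, Res z i l * (a l : ℂ)‖ ≤ (1 + M_R) * B' := by
  intro z hz i
  obtain ⟨z₀, hz₀Γ, hz₀d⟩ := hnet z hz
  have hz₀ : z₀ ∈ Metric.sphere (0 : ℂ) (2 * B) := hΓ₀ hz₀Γ
  set A := K.map (Complex.ofReal) with hA
  have hdet : ∀ w ∈ Metric.sphere (0:ℂ) (2*B),
      IsUnit (A - w • (1 : Matrix (Fin d) (Fin d) ℂ)).det := fun w hw =>
    (Matrix.isUnit_iff_isUnit_det _).mp (hinv w hw)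
  have hRz' : Res z * (A - z • 1) = 1 := by
    rw [hRes]; exact Matrix.nonsing_inv_mul _ (hdet z hz)
  have hRz₀ : (A - z₀ • 1) * Res z₀ = 1 := by
    rw [hRes]; exact Matrix.mul_nonsing_inv _ (hdet z₀ hz₀)
  -- resolvent identity
  have hres : Res z = Res z₀ + (z - z₀) • (Res z * Res z₀) := by
    have h1 : Res z * ((A - z₀ • 1) - (A - z • 1)) * Res z₀ = Res z - Res z₀ := by
      rw [Matrix.mul_sub, Matrix.sub_mul, Matrix.mul_assoc, hRz₀, Matrix.mul_one,
        hRz', Matrix.one_mul]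
    have h2 : (A - z₀ • (1 : Matrix (Fin d) (Fin d) ℂ)) - (A - z • 1) = (z - z₀) • 1 := by
      rw [sub_smul]; abel
    rw [h2] at h1
    have h3 : Res z * ((z - z₀) • (1 : Matrix (Fin d) (Fin d) ℂ)) * Res z₀
        = (z - z₀) • (Res z * Res z₀) := by
      rw [Matrix.mul_smul, Matrix.mul_one, Matrix.smul_mul]
    rw [h3] at h1
    linear_combination (norm := abel) -h1
  set aC : Fin d → ℂ := fun l => (a l : ℂ) with haC
  set w : Fin d → ℂ := (Res z₀).mulVec aC with hw
  have hwj : ∀ j, ‖w j‖ ≤ B' := by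
    intro j
    have := hB' z₀ hz₀Γ j
    simpa [hw, Matrix.mulVec, dotProduct, haC] using this
  have hB'0 : 0 ≤ B' := le_trans (norm_nonneg _) (hwj ⟨0, hd⟩)
  have hMR0 : 0 ≤ M_R := by
    have h := hMR z hz (fun _ => 1)
    have hc : cNorm (fun _ : Fin d => (1:ℂ)) = Real.sqrt d := by
      simp [cNorm]
    rw [hc] at h
    have hs : (0:ℝ) < Real.sqrt d := Real.sqrt_pos.mpr (by exact_mod_cast hd)
    have hnn : (0:ℝ) ≤ cNorm ((Res z).mulVec fun _ => (1:ℂ)) := Real.sqrt_nonneg _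
    nlinarith [le_trans hnn h, hs]
  have hsd : (0:ℝ) < Real.sqrt d := Real.sqrt_pos.mpr (by exact_mod_cast hd)
  -- cNorm w ≤ √d * B'
  have hcw : cNorm w ≤ Real.sqrt d * B' := by
    have h1 : (∑ j, ‖w j‖ ^ 2) ≤ ∑ _j : Fin d, B' ^ 2 := by
      apply Finset.sum_le_sum
      intro j _
      exact pow_le_pow_left₀ (norm_nonneg _) (hwj j) 2
    have h2 : (∑ _j : Fin d, B' ^ 2) = d * B' ^ 2 := by
      simp [Finset.sum_const]
    have : cNorm w ≤ Real.sqrt (d * B' ^ 2) := by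
      apply Real.sqrt_le_sqrt; rw [← h2]; exact h1
    calc cNorm w ≤ Real.sqrt (d * B' ^ 2) := this
      _ = Real.sqrt d * B' := by
          rw [Real.sqrt_mul (by positivity), Real.sqrt_sq hB'0]
  -- entry bound for R z w
  have hentry : ‖(Res z).mulVec w i‖ ≤ cNorm ((Res z).mulVec w) := by
    rw [cNorm]
    rw [show ‖(Res z).mulVec w i‖
        = Real.sqrt (‖(Res z).mulVec w i‖ ^ 2) from
      (Real.sqrt_sq (norm_nonneg _)).symm]
    apply Real.sqrt_le_sqrt
    exact Finset.single_le_sum (f := fun j => ‖((Res z).mulVec w) j‖ ^ 2)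
      (fun j _ => sq_nonneg _) (Finset.mem_univ i)
  have hRw : cNorm ((Res z).mulVec w) ≤ M_R * (Real.sqrt d * B') :=
    le_trans (hMR z hz w) (by
      exact mul_le_mul_of_nonneg_left hcw hMR0)
  -- main decomposition
  have hdecomp : (Res z).mulVec aC i = w i + (z - z₀) * (Res z).mulVec w i := by
    conv_lhs => rw [hres]
    simp [Matrix.add_mulVec, Matrix.smul_mulVec, hw, Matrix.mulVec_mulVec,
      Pi.add_apply, Pi.smul_apply, smul_eq_mul]
  have hgoal : ‖(Res z).mulVec aC i‖ ≤ (1 + M_R) * B' := by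
    rw [hdecomp]
    calc ‖w i + (z - z₀) * (Res z).mulVec w i‖
        ≤ ‖w i‖ + ‖(z - z₀) * (Res z).mulVec w i‖ :=
          norm_add_le _ _
      _ = ‖w i‖ + ‖z - z₀‖ * ‖(Res z).mulVec w i‖ := by
          rw [norm_mul]
      _ ≤ B' + (1 / Real.sqrt d) * (M_R * (Real.sqrt d * B')) := by
          refine add_le_add (hwj i) ?_
          exact mul_le_mul hz₀d (le_trans hentry hRw) (norm_nonneg _) (by positivity)
      _ = (1 + M_R) * B' := by
          field_simp
  simpa [Matrix.mulVec, dotProduct, haC] using hgoal
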